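/- Let S be a monoid with identity e and let ω: S → [1, ∞) be a weight (ω(st) ≤ ω(s)ω(t), ω(e) = 1). If p ∈ ℓ¹(S, ω) is a nonzero idempotent under convolution with p ≠ δ_e, then ‖p‖_ω ≥ (1/2)·inf{ω(s) : s ∈ S, s ≠ e}. -/

import Mathlib

open Function

/-- Reindexing pairs by their product. -/
def convSigmaEquiv (S : Type*) [Monoid S] :
    (S × S) ≃ Σ r : S, {x : S × S // x.1 * x.2 = r} where
  toFun x := ⟨x.1 * x.2, x, rfl⟩
  invFun y := y.2.1
  left_inv x := rfl
  right_inv := by rintro ⟨r, x, rfl⟩; rfl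

lemma fiber_summable {S : Type*} [Monoid S] (f : S → ℂ)
    (hs : Summable fun s => ‖f s‖) (r : S) :
    Summable (fun x : {x : S × S // x.1 * x.2 = r} => ‖f x.1.1‖ * ‖f x.1.2‖) :=
  (hs.mul_of_nonneg hs (fun _ => norm_nonneg _) (fun _ => norm_nonneg _)).subtype
    {x : S × S | x.1 * x.2 = r}

lemma aux_one_le {S : Type*} [Monoid S] (f : S → ℂ)
    (hs : Summable fun s => ‖f s‖)
    (hid : ∀ r : S, f r = ∑' x : {x : S × S // x.1 * x.2 = r}, f x.1.1 * f x.1.2)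
    (hf : f ≠ 0) : 1 ≤ ∑' s, ‖f s‖ := by
  set N := ∑' s, ‖f s‖ with hN
  have hprod : Summable fun x : S × S => ‖f x.1‖ * ‖f x.2‖ :=
    hs.mul_of_nonneg hs (fun _ => norm_nonneg _) (fun _ => norm_nonneg _)
  have hG : Summable fun y : Σ r : S, {x : S × S // x.1 * x.2 = r} =>
      ‖f y.2.1.1‖ * ‖f y.2.1.2‖ := ((convSigmaEquiv S).summable_iff).mp hprod
  have h1 : (∑' y : Σ r : S, {x : S × S // x.1 * x.2 = r}, ‖f y.2.1.1‖ * ‖f y.2.1.2‖)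
      = N * N := by
    rw [← (convSigmaEquiv S).tsum_eq]
    show (∑' x : S × S, ‖f x.1‖ * ‖f x.2‖) = N * N
    rw [Summable.tsum_prod hprod]
    simp_rw [tsum_mul_left]
    rw [tsum_mul_right]
  have hbound : ∀ r : S, ‖f r‖ ≤ ∑' x : {x : S × S // x.1 * x.2 = r},
      ‖f x.1.1‖ * ‖f x.1.2‖ := by
    intro r
    rw [hid r]
    refine (norm_tsum_le_tsum_norm ?_).trans_eq ?_
    · simpa only [norm_mul] using fiber_summable f hs r
    · exact tsum_congr fun x => norm_mul _ _
  have houter : Summable fun r : S => ∑' x : {x : S × S // x.1 * x.2 = r},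
      ‖f x.1.1‖ * ‖f x.1.2‖ := hG.sigma
  have hNN : N ≤ N * N := by
    calc N ≤ ∑' (r : S), ∑' x : {x : S × S // x.1 * x.2 = r}, ‖f x.1.1‖ * ‖f x.1.2‖ :=
          Summable.tsum_le_tsum hbound hs houter
    _ = N * N := by rw [← Summable.tsum_sigma hG]; exact h1
  have hpos : 0 < N := by
    obtain ⟨s, hs0⟩ := Function.ne_iff.mp hf
    have : ‖f s‖ ≤ N := Summable.le_tsum hs s fun j _ => norm_nonneg _
    have h0 : 0 < ‖f s‖ := norm_pos_iff.mpr hs0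
    linarith
  nlinarith

/-- A nonzero idempotent `p ≠ δ_e` in a weighted semigroup algebra `ℓ¹(S, ω)`
(with `ω ≥ 1`) satisfies `‖p‖_ω ≥ (1/2) inf{ω(s) : s ≠ e}`. -/
theorem weighted_l1_idempotent_norm_lower_bound
    {S : Type*} [Monoid S] [DecidableEq S]
    (ω : S → ℝ) (hω1 : ∀ s, 1 ≤ ω s) (hωmul : ∀ s t, ω (s * t) ≤ ω s * ω t)
    (hωe : ω 1 = 1)
    (p : S → ℂ) (hsum : Summable fun s => ‖p s‖ * ω s)
    (hidem : ∀ r : S,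
      p r = ∑' x : {x : S × S // x.1 * x.2 = r}, p x.1.1 * p x.1.2)
    (hp0 : p ≠ 0)
    (hpδ : p ≠ fun s => if s = 1 then (1 : ℂ) else 0) :
    (1 / 2) * sInf {x : ℝ | ∃ s : S, s ≠ 1 ∧ ω s = x} ≤ ∑' s, ‖p s‖ * ω s := by
  classical
  have hsum1 : Summable fun s => ‖p s‖ :=
    Summable.of_nonneg_of_le (fun s => norm_nonneg _)
      (fun s => le_mul_of_one_le_right (norm_nonneg _) (hω1 s)) hsum
  set q : S → ℝ := fun s => if s = 1 then 0 else ‖p s‖ with hqdef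
  have hq : Summable q := by
    refine Summable.of_nonneg_of_le (fun s => ?_) (fun s => ?_) hsum1 <;>
      simp only [hqdef] <;> split <;> simp [norm_nonneg]
  set Q := ∑' s, q s with hQdef
  have hQ0 : 0 ≤ Q := tsum_nonneg fun s => by simp only [hqdef]; split <;> simp [norm_nonneg]
  set a := p 1 with hadef
  -- Constraint 1 : 1 ≤ ‖a‖ + Q
  have hc1 : 1 ≤ ‖a‖ + Q := by
    have := aux_one_le p hsum1 hidem hp0
    rwa [Summable.tsum_eq_add_tsum_ite hsum1 1] at this
  -- the complementary idempotent
  set pc : S → ℂ := fun s => (if s = 1 then (1 : ℂ) else 0) - p s with hpcdef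
  have hδsum : Summable fun s : S => if s = 1 then (1 : ℝ) else 0 :=
    summable_of_ne_finset_zero (s := {1}) (by intro b hb; simp at hb; simp [hb])
  have hpcsum : Summable fun s => ‖pc s‖ := by
    refine Summable.of_nonneg_of_le (fun s => norm_nonneg _) (fun s => ?_) (hδsum.add hsum1)
    refine (norm_sub_le _ _).trans ?_
    gcongr
    split <;> simp
  have hpcid : ∀ r : S, pc r = ∑' x : {x : S × S // x.1 * x.2 = r}, pc x.1.1 * pc x.1.2 := by
    intro r
    have hGsum : Summable fun x : {x : S × S // x.1 * x.2 = r} => p x.1.1 * p x.1.2 :=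
      Summable.of_norm (by simpa only [norm_mul] using fiber_summable p hsum1 r)
    by_cases hr : r = 1
    · subst hr
      set b : {x : S × S // x.1 * x.2 = (1 : S)} := ⟨(1, 1), mul_one 1⟩ with hbdef
      have hsupp : ∀ x : {x : S × S // x.1 * x.2 = (1 : S)},
          x ∉ ({b} : Finset _) → pc x.1.1 * pc x.1.2 - p x.1.1 * p x.1.2 = 0 := by
        intro x hx
        simp only [Finset.mem_singleton] at hx
        have h1 : x.1.1 ≠ 1 := by
          intro h
          have h2 : x.1.2 = 1 := by have := x.2; rwa [h, one_mul] at this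
          exact hx (Subtype.ext (Prod.ext h h2))
        have h2 : x.1.2 ≠ 1 := by
          intro h
          have h1' : x.1.1 = 1 := by have := x.2; rwa [h, mul_one] at this
          exact h1 h1'
        simp only [hpcdef, if_neg h1, if_neg h2]
        ring
      have hDsum : Summable fun x : {x : S × S // x.1 * x.2 = (1 : S)} =>
          pc x.1.1 * pc x.1.2 - p x.1.1 * p x.1.2 := summable_of_ne_finset_zero hsupp
      have hDval : (∑' x : {x : S × S // x.1 * x.2 = (1 : S)},
          (pc x.1.1 * pc x.1.2 - p x.1.1 * p x.1.2)) = (1 - a) * (1 - a) - a * a := by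
        rw [tsum_eq_sum hsupp, Finset.sum_singleton]
        simp [hbdef, hpcdef, hadef]
      have : (∑' x : {x : S × S // x.1 * x.2 = (1 : S)}, pc x.1.1 * pc x.1.2)
          = (∑' x : {x : S × S // x.1 * x.2 = (1 : S)}, p x.1.1 * p x.1.2)
            + ((1 - a) * (1 - a) - a * a) := by
        rw [← hDval, ← Summable.tsum_add hGsum hDsum]
        exact tsum_congr fun x => by ring
      rw [this, ← hidem 1]
      simp only [hpcdef, if_pos rfl, if_true, hadef]
      ring
    · set b1 : {x : S × S // x.1 * x.2 = r} := ⟨(1, r), one_mul r⟩ with hb1def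
      set b2 : {x : S × S // x.1 * x.2 = r} := ⟨(r, 1), mul_one r⟩ with hb2def
      have hb12 : b1 ≠ b2 := by
        intro h
        have := congrArg (fun y => y.1.1) h
        simp only [hb1def, hb2def] at this
        exact hr this.symm
      have hsupp : ∀ x : {x : S × S // x.1 * x.2 = r},
          x ∉ ({b1, b2} : Finset _) → pc x.1.1 * pc x.1.2 - p x.1.1 * p x.1.2 = 0 := by
        intro x hx
        simp only [Finset.mem_insert, Finset.mem_singleton] at hx
        push_neg at hx
        have h1 : x.1.1 ≠ 1 := by
          intro h
          have h2 : x.1.2 = r := by have := x.2; rwa [h, one_mul] at this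
          exact hx.1 (Subtype.ext (Prod.ext h h2))
        have h2 : x.1.2 ≠ 1 := by
          intro h
          have h1' : x.1.1 = r := by have := x.2; rwa [h, mul_one] at this
          exact hx.2 (Subtype.ext (Prod.ext h1' h))
        simp only [hpcdef, if_neg h1, if_neg h2]
        ring
      have hDsum : Summable fun x : {x : S × S // x.1 * x.2 = r} =>
          pc x.1.1 * pc x.1.2 - p x.1.1 * p x.1.2 := summable_of_ne_finset_zero hsupp
      have hDval : (∑' x : {x : S × S // x.1 * x.2 = r},
          (pc x.1.1 * pc x.1.2 - p x.1.1 * p x.1.2)) = -p r - p r := by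
        rw [tsum_eq_sum hsupp, Finset.sum_insert (by simpa using hb12), Finset.sum_singleton]
        simp only [hb1def, hb2def, hpcdef, if_pos rfl, if_true, if_neg hr]
        ring
      have : (∑' x : {x : S × S // x.1 * x.2 = r}, pc x.1.1 * pc x.1.2)
          = (∑' x : {x : S × S // x.1 * x.2 = r}, p x.1.1 * p x.1.2)
            + (-p r - p r) := by
        rw [← hDval, ← Summable.tsum_add hGsum hDsum]
        exact tsum_congr fun x => by ring
      rw [this, ← hidem r]
      simp only [hpcdef, if_neg hr]
      ring
  have hpc0 : pc ≠ 0 := by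
    intro h
    apply hpδ
    funext s
    have := congrFun h s
    simp only [hpcdef, Pi.zero_apply, sub_eq_zero] at this
    exact this.symm
  -- Constraint 2 : 1 ≤ ‖1 - a‖ + Q
  have hc2 : 1 ≤ ‖1 - a‖ + Q := by
    have h := aux_one_le pc hpcsum hpcid hpc0
    rw [Summable.tsum_eq_add_tsum_ite hpcsum 1] at h
    have he1 : ‖pc 1‖ = ‖1 - a‖ := by simp [hpcdef, hadef]
    have he2 : (∑' s : S, if s = 1 then 0 else ‖pc s‖) = Q := by
      refine tsum_congr fun s => ?_
      by_cases h1 : s = 1 <;> simp [hqdef, h1, hpcdef]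
    rwa [he1, he2] at h
  -- Constraint 3 : ‖a - a * a‖ ≤ Q * Q
  have hc3 : ‖a - a * a‖ ≤ Q * Q := by
    set b : {x : S × S // x.1 * x.2 = (1 : S)} := ⟨(1, 1), mul_one 1⟩ with hbdef
    have hGsum : Summable fun x : {x : S × S // x.1 * x.2 = (1 : S)} => p x.1.1 * p x.1.2 :=
      Summable.of_norm (by simpa only [norm_mul] using fiber_summable p hsum1 1)
    have hsplit := Summable.tsum_eq_add_tsum_ite hGsum b
    have heq : a - a * a = ∑' x : {x : S × S // x.1 * x.2 = (1 : S)},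
        if x = b then 0 else p x.1.1 * p x.1.2 := by
      have h1 := hidem 1
      rw [hsplit] at h1
      have hb : p b.1.1 * p b.1.2 = a * a := by simp [hbdef, hadef]
      rw [hb] at h1
      linear_combination h1
    have hnormsum : Summable fun x : {x : S × S // x.1 * x.2 = (1 : S)} =>
        ‖if x = b then 0 else p x.1.1 * p x.1.2‖ := by
      refine Summable.of_nonneg_of_le (fun x => norm_nonneg _) (fun x => ?_)
        (fiber_summable p hsum1 1)
      split <;> simp [norm_mul, mul_nonneg, norm_nonneg]
    rw [heq]
    refine (norm_tsum_le_tsum_norm hnormsum).trans ?_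
    have hgsum : Summable fun x : S × S => q x.1 * q x.2 :=
      hq.mul_of_nonneg hq
        (fun s => by simp only [hqdef]; split <;> simp [norm_nonneg])
        (fun s => by simp only [hqdef]; split <;> simp [norm_nonneg])
    have hqnonneg : ∀ s, 0 ≤ q s := fun s => by
      simp only [hqdef]; split <;> simp [norm_nonneg]
    have hle : (∑' x : {x : S × S // x.1 * x.2 = (1 : S)},
        ‖if x = b then 0 else p x.1.1 * p x.1.2‖) ≤ ∑' x : S × S, q x.1 * q x.2 := by
      refine Summable.tsum_le_tsum_of_inj Subtype.val Subtype.val_injective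
        (fun c _ => mul_nonneg (hqnonneg _) (hqnonneg _)) (fun x => ?_) hnormsum hgsum
      by_cases hx : x = b
      · simp [hx, mul_nonneg (hqnonneg _) (hqnonneg _)]
      · have h1 : x.1.1 ≠ 1 := by
          intro h
          have h2 : x.1.2 = 1 := by have := x.2; rwa [h, one_mul] at this
          exact hx (Subtype.ext (Prod.ext h h2))
        have h2 : x.1.2 ≠ 1 := by
          intro h
          have h1' : x.1.1 = 1 := by have := x.2; rwa [h, mul_one] at this
          exact h1 h1'
        simp only [if_neg hx, hqdef, if_neg h1, if_neg h2, norm_mul, le_refl]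
    refine hle.trans_eq ?_
    rw [Summable.tsum_prod hgsum]
    simp_rw [tsum_mul_left]
    rw [tsum_mul_right, ← hQdef]
  -- Q ≥ 1/2
  have hQhalf : 1 / 2 ≤ Q := by
    by_contra h
    push_neg at h
    have hA : 1 - Q ≤ ‖a‖ := by linarith
    have hB : 1 - Q ≤ ‖1 - a‖ := by linarith
    have hm : (1 - Q) * (1 - Q) ≤ ‖a‖ * ‖1 - a‖ :=
      mul_le_mul hA hB (by linarith) (norm_nonneg _)
    have hprod : ‖a‖ * ‖1 - a‖ = ‖a - a * a‖ := by
      rw [← norm_mul]; ring_nf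
    nlinarith [hc3]
  -- conclusion
  by_cases hne : {x : ℝ | ∃ s : S, s ≠ 1 ∧ ω s = x}.Nonempty
  · have hbdd : BddBelow {x : ℝ | ∃ s : S, s ≠ 1 ∧ ω s = x} := by
      refine ⟨1, ?_⟩
      rintro x ⟨s, -, rfl⟩
      exact hω1 s
    set I := sInf {x : ℝ | ∃ s : S, s ≠ 1 ∧ ω s = x} with hIdef
    have hI1 : 1 ≤ I := by
      refine le_csInf hne ?_
      rintro x ⟨s, -, rfl⟩
      exact hω1 s
    have hterm : ∀ s, I * q s ≤ ‖p s‖ * ω s := by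
      intro s
      by_cases h1 : s = 1
      · simp only [hqdef, if_pos h1, mul_zero]
        exact mul_nonneg (norm_nonneg _) (le_trans zero_le_one (hω1 s))
      · simp only [hqdef, if_neg h1]
        have hIs : I ≤ ω s := csInf_le hbdd ⟨s, h1, rfl⟩
        calc I * ‖p s‖ ≤ ω s * ‖p s‖ := mul_le_mul_of_nonneg_right hIs (norm_nonneg _)
        _ = ‖p s‖ * ω s := mul_comm _ _
    have hIQ : I * Q ≤ ∑' s, ‖p s‖ * ω s := by
      rw [hQdef, ← tsum_mul_left]
      exact Summable.tsum_le_tsum hterm (hq.mul_left I) hsum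
    calc (1 / 2) * I ≤ Q * I := mul_le_mul_of_nonneg_right hQhalf (by linarith)
    _ = I * Q := mul_comm _ _
    _ ≤ _ := hIQ
  · rw [Set.not_nonempty_iff_eq_empty] at hne
    rw [hne, Real.sInf_empty, mul_zero]
    exact tsum_nonneg fun s => mul_nonneg (norm_nonneg _) (le_trans zero_le_one (hω1 s))
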